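/- arXiv:1505.00823 — 2 statements merged into one kernel-verified Lean document; each statement's English description precedes it below -/
import Mathlib

section
/- Let (m,n) be a coprime pair of positive integers. A word σ of n S's and m W's is the SW-sequence of some (m,n)-Dyck path if and only if there exists a set R of m+n nonnegative integers with 0 ∈ R that is compatible with σ. Moreover, if R is compatible with σ, then R is the rank set of an (m,n)-Dyck path D with σ(D)=σ. -/
/-- The list of ranks of the lattice points visited by a path (excluding the final
point), starting from rank `r`.  A `true` entry is a north (`u`) step, which adds `m`
to the rank; a `false` entry is an east (`d`) step, which subtracts `n`. -/
def rankWalk (m n : ℤ) : List Bool → ℤ → List ℤ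
  | [], _ => []
  | b :: bs, r => r :: rankWalk m n bs (r + if b then m else -n)

/-- An `(m,n)`-path: a word of `n` north steps (`true`) and `m` east steps (`false`). -/
def IsPathWord (m n : ℕ) (P : List Bool) : Prop :=
  P.length = m + n ∧ P.count true = n

/-- An `(m,n)`-Dyck path: an `(m,n)`-path all of whose ranks are nonnegative. -/
def IsDyckWord (m n : ℕ) (P : List Bool) : Prop :=
  IsPathWord m n P ∧ ∀ r ∈ rankWalk (m : ℤ) (n : ℤ) P 0, 0 ≤ r

/-- The rank set of a path: the ranks of its `m+n` lattice points other than the endpoint. -/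
def rankSet (m n : ℕ) (P : List Bool) : Finset ℤ :=
  (rankWalk (m : ℤ) (n : ℤ) P 0).toFinset

/-- `R` is the rank set of some `(m,n)`-path. -/
def IsRankSet (m n : ℕ) (R : Finset ℤ) : Prop :=
  ∃ P : List Bool, IsPathWord m n P ∧ rankSet m n P = R

/-- `R` is the rank set of some `(m,n)`-Dyck path. -/
def IsDyckRankSet (m n : ℕ) (R : Finset ℤ) : Prop :=
  ∃ P : List Bool, IsDyckWord m n P ∧ rankSet m n P = R

/-- The SW-sequence of a (Dyck path) rank set `R`, reading the sorted ranks from left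
to right: `true` (= the letter `S`) at rank `r` iff `r + m ∈ R`, i.e. `r ∈ S(R) = R ∩ (R - m)`;
otherwise `false` (= the letter `W`). -/
def swSeq (m : ℕ) (R : Finset ℤ) : List Bool :=
  (R.sort (· ≤ ·)).map (fun r => decide (r + (m : ℤ) ∈ R))

/-- A set `R` of `m + n` nonnegative integers containing `0`, with sorted sequence
`𝔯_1 < ⋯ < 𝔯_{m+n}`, is compatible with the word `σ` (where `true` = `S`, `false` = `W`)
if `𝔯_{σ⁻¹(S_i)} + m ∈ R` for all `i` and `𝔯_{σ⁻¹(W_j)} - n ∈ R` for all `j`. -/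
def Compatible (m n : ℕ) (σ : List Bool) (R : Finset ℤ) : Prop :=
  R.card = m + n ∧ (0 : ℤ) ∈ R ∧ (∀ r ∈ R, 0 ≤ r) ∧
    ∀ p ∈ σ.zip (R.sort (· ≤ ·)),
      (p.1 = true → p.2 + (m : ℤ) ∈ R) ∧ (p.1 = false → p.2 - (n : ℤ) ∈ R)

def rankEnd (m n : ℤ) : List Bool → ℤ → ℤ
  | [], r => r
  | b :: bs, r => rankEnd m n bs (r + if b then m else -n)

lemma rankWalk_length (m n : ℤ) : ∀ (P : List Bool) (r : ℤ),
    (rankWalk m n P r).length = P.length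
  | [], _ => rfl
  | b :: bs, r => by simp [rankWalk, rankWalk_length m n bs]

lemma count_true_add_count_false : ∀ l : List Bool, l.count true + l.count false = l.length
  | [] => rfl
  | b :: bs => by
    have := count_true_add_count_false bs
    cases b <;> simp [List.count_cons] <;> omega

lemma rankEnd_eq (m n : ℤ) : ∀ (P : List Bool) (r : ℤ),
    rankEnd m n P r = r + (P.count true) * m - (P.count false) * n
  | [], r => by simp [rankEnd]
  | b :: bs, r => by
    cases b <;> simp [rankEnd, rankEnd_eq m n bs, List.count_cons] <;> ring

lemma rankWalk_succ (m n : ℤ) : ∀ (P : List Bool) (r : ℤ), ∀ x ∈ rankWalk m n P r,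
    (x + m ∈ rankWalk m n P r ∨ x + m = rankEnd m n P r) ∨
    (x - n ∈ rankWalk m n P r ∨ x - n = rankEnd m n P r)
  | [], r => by simp [rankWalk]
  | b :: bs, r => by
    intro x hx
    rw [rankWalk] at hx ⊢
    rcases List.mem_cons.1 hx with rfl | hx
    · cases b with
      | true =>
        refine Or.inl ?_
        cases bs with
        | nil => exact Or.inr (by simp [rankWalk, rankEnd])
        | cons c cs =>
          refine Or.inl ?_
          rw [show x + m = x + if true then m else -n from by simp]
          exact List.mem_cons_of_mem _ (by rw [rankWalk]; exact List.mem_cons_self)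
      | false =>
        refine Or.inr ?_
        cases bs with
        | nil => exact Or.inr (by simp [rankWalk, rankEnd]; ring)
        | cons c cs =>
          refine Or.inl ?_
          rw [show x - n = x + if false then m else -n from by simp; ring]
          exact List.mem_cons_of_mem _ (by rw [rankWalk]; exact List.mem_cons_self)
    · rcases rankWalk_succ m n bs _ x hx with (h | h) | (h | h)
      · exact Or.inl (Or.inl (List.mem_cons_of_mem _ h))
      · exact Or.inl (Or.inr (by rw [h]; rfl))
      · exact Or.inr (Or.inl (List.mem_cons_of_mem _ h))
      · exact Or.inr (Or.inr (by rw [h]; rfl))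

lemma rankWalk_eq_map (m n : ℤ) : ∀ (P : List Bool) (r : ℤ),
    rankWalk m n P r = (List.range P.length).map
      (fun k => r + ((P.take k).count true) * m - ((P.take k).count false) * n)
  | [], r => by simp [rankWalk]
  | b :: bs, r => by
    rw [rankWalk, rankWalk_eq_map m n bs]
    simp only [List.length_cons, List.range_succ_eq_map, List.map_cons, List.map_map]
    congr 1
    · simp
    · apply List.map_congr_left
      intro k hk
      simp only [Function.comp_apply, Nat.succ_eq_add_one, List.take_succ_cons, List.count_cons]
      cases b <;> simp <;> push_cast <;> ring

lemma dioph {m n a b : ℕ} (hcop : Nat.Coprime m n) (h : a * m = b * n) :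
    ∃ s, a = n * s ∧ b = m * s := by
  have hn : n ∣ a := (Nat.Coprime.dvd_of_dvd_mul_right hcop.symm) ⟨b, by linarith⟩
  obtain ⟨s, rfl⟩ := hn
  rcases Nat.eq_zero_or_pos n with rfl | hpos
  · have hm1 : m = 1 := Nat.coprime_zero_right m |>.mp hcop
    subst hm1
    exact ⟨b, by simp, (one_mul b).symm⟩
  · refine ⟨s, rfl, ?_⟩
    have h2 : n * (s * m) = n * b := by ring_nf; ring_nf at h; linarith
    have h3 := Nat.eq_of_mul_eq_mul_left hpos h2
    simpa [Nat.mul_comm] using h3.symm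

lemma rankWalk_nodup (m n : ℕ) (hcop : Nat.Coprime m n) (P : List Bool)
    (hlen : P.length = m + n) (r : ℤ) :
    (rankWalk (m : ℤ) (n : ℤ) P r).Nodup := by
  rw [rankWalk_eq_map]
  refine List.Nodup.map_on ?_ (List.nodup_range)
  have key : ∀ k l : ℕ, k < P.length → l < P.length → k < l →
      r + ((P.take k).count true) * (m : ℤ) - ((P.take k).count false) * (n : ℤ) =
      r + ((P.take l).count true) * (m : ℤ) - ((P.take l).count false) * (n : ℤ) → False := by
    intro k l hk hl hkl heq
    set ck := (P.take k).count true with hck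
    set cl := (P.take l).count true with hcl
    set dk := (P.take k).count false with hdk
    set dl := (P.take l).count false with hdl
    have hsub : List.Sublist (P.take k) (P.take l) := by
      have : (P.take l).take k = P.take k := by rw [List.take_take]; congr 1; omega
      rw [← this]; exact List.take_sublist _ _
    have hc : ck ≤ cl := hsub.count_le true
    have hd : dk ≤ dl := hsub.count_le false
    have hlk : ck + dk = k := by
      have := count_true_add_count_false (P.take k)
      rwa [List.length_take, min_eq_left (by omega)] at this
    have hll : cl + dl = l := by
      have := count_true_add_count_false (P.take l)
      rwa [List.length_take, min_eq_left (by omega)] at this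
    have hz : ((cl - ck : ℕ) : ℤ) * m = ((dl - dk : ℕ) : ℤ) * n := by
      push_cast [hc, hd]
      linarith [heq]
    have hzn : (cl - ck) * m = (dl - dk) * n := by exact_mod_cast hz
    obtain ⟨s, hs1, hs2⟩ := dioph hcop hzn
    have h1 : 1 ≤ s := by
      rcases Nat.eq_zero_or_pos s with rfl | h
      · simp at hs1 hs2; omega
      · exact h
    have h2 : n ≤ n * s := Nat.le_mul_of_pos_right _ h1
    have h3 : m ≤ m * s := Nat.le_mul_of_pos_right _ h1
    omega
  intro k hk l hl heq
  simp only [List.mem_range] at hk hl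
  rcases lt_trichotomy k l with h | h | h
  · exact absurd heq (fun he => key k l hk hl h he)
  · exact h
  · exact absurd heq.symm (fun he => key l k hl hk h he)


lemma coprime_sum_dvd {m n : ℕ} (hcop : Nat.Coprime m n) {a c : ℕ}
    (h : a * (m + n) = c * n) : (m + n) ∣ c := by
  have hcop2 : Nat.Coprime (m + n) n := by simpa using hcop
  exact hcop2.dvd_of_dvd_mul_right ⟨a, by rw [← h]; ring⟩

lemma mem_zip_map {α β : Type*} (g : α → β) : ∀ (L : List α) (p : β × α),
    p ∈ (L.map g).zip L → p.1 = g p.2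
  | [], p => by simp
  | a :: L, p => by
    intro h
    rw [List.map_cons, List.zip_cons_cons, List.mem_cons] at h
    rcases h with rfl | h
    · rfl
    · exact mem_zip_map g L p h

lemma compatible_main (m n : ℕ) (hm : 0 < m) (hn : 0 < n) (hcop : Nat.Coprime m n)
    (σ : List Bool) (hlen : σ.length = m + n)
    (R : Finset ℤ) (hc : Compatible m n σ R) :
    ∃ P : List Bool, IsDyckWord m n P ∧ rankSet m n P = R ∧ swSeq m R = σ := by
  obtain ⟨hcard, h0, hposR, hzip⟩ := hc
  set N := m + n with hN
  have hNpos : 0 < N := by omega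
  set L := R.sort (· ≤ ·) with hL
  have hLlen : L.length = N := by rw [hL, Finset.length_sort, hcard]
  -- every element has a step
  have hstep : ∀ r ∈ R, (r + (m : ℤ) ∈ R ∨ r - (n : ℤ) ∈ R) := by
    intro r hr
    have hrL : r ∈ L := by rw [hL, Finset.mem_sort]; exact hr
    obtain ⟨i, hi, hgi⟩ := List.mem_iff_getElem.1 hrL
    have hiz : i < (σ.zip L).length := by
      rw [List.length_zip]; omega
    have hmem : (σ[i]'(by omega), L[i]'hi) ∈ σ.zip L := by
      have h2 := List.getElem_mem hiz
      rwa [List.getElem_zip] at h2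
    have h3 := hzip _ hmem
    rcases Bool.eq_false_or_eq_true (σ[i]'(by omega)) with hb | hb
    · left; rw [← hgi]; exact h3.1 hb
    · right; rw [← hgi]; exact h3.2 hb
  -- the successor map
  set f : ℤ → ℤ := fun r => if r + (m : ℤ) ∈ R then r + (m : ℤ) else r - (n : ℤ) with hf
  have hfR : ∀ r ∈ R, f r ∈ R := by
    intro r hr
    by_cases h : r + (m : ℤ) ∈ R
    · simp only [hf, if_pos h]; exact h
    · simp only [hf, if_neg h]; exact (hstep r hr).resolve_left h
  have hiterR : ∀ x ∈ R, ∀ k : ℕ, f^[k] x ∈ R := by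
    intro x hx k
    induction k with
    | zero => simpa using hx
    | succ k ih => rw [Function.iterate_succ_apply']; exact hfR _ ih
  -- counting function and displacement formula
  set T : ℕ → ℤ → ℕ := fun p x => (List.range p).countP (fun i => decide (f^[i] x + (m : ℤ) ∈ R))
    with hT
  have hformula : ∀ (p : ℕ) (x : ℤ),
      f^[p] x = x + (T p x : ℤ) * ((m : ℤ) + n) - (p : ℤ) * n := by
    intro p
    induction p with
    | zero => intro x; simp [hT]
    | succ p ih =>
      intro x
      rw [Function.iterate_succ_apply']
      by_cases h : f^[p] x + (m : ℤ) ∈ R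
      · have hTs : T (p + 1) x = T p x + 1 := by
          simp [hT, List.range_succ, h]
        have hfx : f (f^[p] x) = f^[p] x + (m : ℤ) := by exact if_pos h
        rw [hfx, ih, hTs]; push_cast; ring
      · have hTs : T (p + 1) x = T p x := by
          simp [hT, List.range_succ, h]
        have hfx : f (f^[p] x) = f^[p] x - (n : ℤ) := by exact if_neg h
        rw [hfx, ih, hTs]; push_cast; ring
  -- periods are multiples of m + n
  have hperiod : ∀ (x : ℤ) (p : ℕ), f^[p] x = x → (m + n) ∣ p ∧ T p x * (m + n) = p * n := by
    intro x p hp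
    have h1 := hformula p x
    rw [hp] at h1
    have hz : (T p x : ℤ) * ((m : ℤ) + n) = (p : ℤ) * n := by linarith
    have hzn : T p x * (m + n) = p * n := by exact_mod_cast hz
    exact ⟨coprime_sum_dvd hcop hzn, hzn⟩
  -- injectivity along orbits
  have horb_inj : ∀ (x : ℤ) (a b : ℕ), a < b → b - a < m + n → f^[a] x ≠ f^[b] x := by
    intro x a b hab hlt he
    have h1 : f^[b - a] (f^[a] x) = f^[a] x := by
      rw [← Function.iterate_add_apply, Nat.sub_add_cancel (le_of_lt hab)]
      exact he.symm
    obtain ⟨hdvd, -⟩ := hperiod _ _ h1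
    have := Nat.le_of_dvd (by omega) hdvd
    omega
  -- the orbit of any point of R covers R
  have hcover : ∀ x ∈ R, ((List.range N).map (fun k => f^[k] x)).toFinset = R := by
    intro x hx
    have hnd : ((List.range N).map (fun k => f^[k] x)).Nodup := by
      refine List.Nodup.map_on ?_ (List.nodup_range)
      intro a ha b hb he
      simp only [List.mem_range] at ha hb
      by_contra hne
      rcases lt_trichotomy a b with h | h | h
      · exact horb_inj x a b h (by omega) he
      · exact hne h
      · exact horb_inj x b a h (by omega) he.symm
    refine Finset.eq_of_subset_of_card_le ?_ ?_
    · intro y hy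
      rw [List.mem_toFinset, List.mem_map] at hy
      obtain ⟨k, -, rfl⟩ := hy
      exact hiterR x hx k
    · rw [List.toFinset_card_of_nodup hnd, List.length_map, List.length_range, hcard]
  -- f^[N] 0 = 0
  have h0N : f^[N] 0 = 0 := by
    have hmem : f^[N] 0 ∈ ((List.range N).map (fun k => f^[k] (0 : ℤ))).toFinset := by
      rw [hcover 0 h0]; exact hiterR 0 h0 N
    rw [List.mem_toFinset, List.mem_map] at hmem
    obtain ⟨k, hk, hke⟩ := hmem
    rw [List.mem_range] at hk
    rcases Nat.eq_zero_or_pos k with rfl | hkpos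
    · simpa using hke.symm
    · exfalso
      have h1 : f^[N - k] (f^[k] 0) = f^[k] 0 := by
        rw [← Function.iterate_add_apply, Nat.sub_add_cancel (le_of_lt hk)]
        exact hke.symm
      obtain ⟨hdvd, -⟩ := hperiod _ _ h1
      have := Nat.le_of_dvd (by omega) hdvd
      omega
  -- the number of up steps is n
  have hTN : T N 0 = n := by
    obtain ⟨-, h1⟩ := hperiod 0 N h0N
    have : T N 0 * (m + n) = n * (m + n) := by rw [h1]; ring
    exact Nat.eq_of_mul_eq_mul_right hNpos this
  -- the path word
  set P : List Bool := (List.range N).map (fun k => decide (f^[k] (0 : ℤ) + (m : ℤ) ∈ R))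
    with hP
  -- the rank walk of P follows the orbit
  have hwalk : ∀ (p : ℕ) (x : ℤ),
      rankWalk (m : ℤ) (n : ℤ) ((List.range p).map (fun k => decide (f^[k] x + (m : ℤ) ∈ R))) x
        = (List.range p).map (fun k => f^[k] x) := by
    intro p
    induction p with
    | zero => intro x; simp [rankWalk]
    | succ p ih =>
      intro x
      have h1 : (x + if decide (x + (m : ℤ) ∈ R) then (m : ℤ) else -(n : ℤ)) = f x := by
        by_cases h : x + (m : ℤ) ∈ R <;> simp [hf, h, sub_eq_add_neg]
      rw [List.range_succ_eq_map, List.map_cons, List.map_cons, List.map_map, List.map_map,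
        rankWalk]
      simp only [Function.iterate_zero_apply]
      erw [h1]
      congr 1
      have h2 : ((fun k => decide (f^[k] x + (m : ℤ) ∈ R)) ∘ Nat.succ)
          = (fun k => decide (f^[k] (f x) + (m : ℤ) ∈ R)) := by
        funext k; simp [Function.iterate_succ_apply]; rfl
      have h3 : ((fun k => f^[k] x) ∘ Nat.succ) = (fun k => f^[k] (f x)) := by
        funext k; simp [Function.iterate_succ_apply]
      rw [h2, h3, ih (f x)]
  have hwalk0 : rankWalk (m : ℤ) (n : ℤ) P 0 = (List.range N).map (fun k => f^[k] (0 : ℤ)) :=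
    hwalk N 0
  -- P is a Dyck word
  have hPlen : P.length = m + n := by simp [hP, hN]
  have hPcount : P.count true = n := by
    rw [hP, List.count_eq_countP, List.countP_map]
    rw [← hTN, hT]
    congr 1
    funext k
    simp
  have hDyck : IsDyckWord m n P := by
    refine ⟨⟨hPlen, hPcount⟩, ?_⟩
    intro r hr
    rw [hwalk0, List.mem_map] at hr
    obtain ⟨k, -, rfl⟩ := hr
    exact hposR _ (hiterR 0 h0 k)
  have hRS : rankSet m n P = R := by
    rw [rankSet, hwalk0]; exact hcover 0 h0
  -- the SW sequence of R is σ
  have hSW : swSeq m R = σ := by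
    have hswlen : (swSeq m R).length = σ.length := by
      rw [swSeq, List.length_map, ← hL, hLlen, hlen]
    refine List.ext_getElem hswlen ?_
    intro i hi1 hi2
    have hiL : i < L.length := by
      rw [swSeq, List.length_map, ← hL] at hi1; exact hi1
    have hiz : i < (σ.zip L).length := by rw [List.length_zip]; omega
    have hmem : (σ[i]'hi2, L[i]'hiL) ∈ σ.zip L := by
      have h2 := List.getElem_mem hiz
      rwa [List.getElem_zip] at h2
    have h3 := hzip _ hmem
    have hgetsw : (swSeq m R)[i]'hi1 = decide (L[i]'hiL + (m : ℤ) ∈ R) := by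
      simp only [swSeq, ← hL, List.getElem_map]
    set r := L[i]'hiL with hr
    have hrR : r ∈ R := by
      rw [← Finset.mem_sort (α := ℤ) (· ≤ ·), ← hL]
      exact List.getElem_mem hiL
    rcases Bool.eq_false_or_eq_true (σ[i]'hi2) with hb | hb
    · -- σ says S here
      have hA : r + (m : ℤ) ∈ R := h3.1 hb
      rw [hgetsw, hb, decide_eq_true_eq]
      exact hA
    · -- σ says W here; show r + m ∉ R
      have hB : r - (n : ℤ) ∈ R := h3.2 hb
      rw [hgetsw, hb, decide_eq_false_iff_not]
      intro hA
      -- find positions on the orbit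
      have hkr : ∃ k < N, f^[k] (0 : ℤ) = r := by
        have := hcover 0 h0
        rw [← this, List.mem_toFinset, List.mem_map] at hrR
        obtain ⟨k, hk, hke⟩ := hrR
        exact ⟨k, List.mem_range.1 hk, hke⟩
      have hjr : ∃ j < N, f^[j] (0 : ℤ) = r - n := by
        have h4 := hcover 0 h0
        rw [← h4, List.mem_toFinset, List.mem_map] at hB
        obtain ⟨j, hj, hje⟩ := hB
        exact ⟨j, List.mem_range.1 hj, hje⟩
      obtain ⟨k, hk, hke⟩ := hkr
      obtain ⟨j, hj, hje⟩ := hjr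
      rcases le_or_gt j k with hjk | hjk
      · -- r - n comes before r : forces r = n and f r = 0, contradiction
        have h5 : f^[k - j] (r - n) = (r - n) + n := by
          rw [← hje, ← Function.iterate_add_apply, Nat.sub_add_cancel hjk, hke, hje]
          ring
        have h6 := hformula (k - j) (r - n)
        rw [h5] at h6
        have h7 : (T (k - j) (r - n) : ℤ) * ((m : ℤ) + n) = ((k - j : ℕ) + 1 : ℤ) * n := by
          push_cast at h6 ⊢
          linarith
        have h8 : T (k - j) (r - n) * (m + n) = (k - j + 1) * n := by exact_mod_cast h7
        have h9 := coprime_sum_dvd hcop h8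
        have h10 : k - j + 1 = N := by
          have := Nat.le_of_dvd (by omega) h9
          omega
        have hj0 : j = 0 := by omega
        have hkN : k = N - 1 := by omega
        have hrn : r = (n : ℤ) := by
          rw [hj0] at hje
          simp at hje
          linarith [hje]
        have hlast : f (f^[k] (0 : ℤ)) = 0 := by
          have hsplit : k + 1 = N := by omega
          have h11 := Function.iterate_succ_apply' f k (0 : ℤ)
          rw [Nat.succ_eq_add_one, hsplit, h0N] at h11
          exact h11.symm
        rw [hke] at hlast
        have : f r = r + (m : ℤ) := by simp only [hf, if_pos hA]
        rw [this, hrn] at hlast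
        have hmpos : (0 : ℤ) < (m : ℤ) + n := by
          have : (0 : ℤ) < (m : ℤ) := by exact_mod_cast hm
          have : (0 : ℤ) < (n : ℤ) := by exact_mod_cast hn
          linarith
        linarith [hlast]
      · -- r comes before r - n : forces j = k + 1 and the step at r is down, contradiction
        have h5 : f^[j - k] r = r - n := by
          rw [← hke, ← Function.iterate_add_apply, Nat.sub_add_cancel (le_of_lt hjk), hje, hke]
        have h6 := hformula (j - k) r
        rw [h5] at h6
        have h7 : (T (j - k) r : ℤ) * ((m : ℤ) + n) = ((j - k - 1 : ℕ) : ℤ) * n := by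
          have hjk1 : (1 : ℕ) ≤ j - k := by omega
          have : ((j - k - 1 : ℕ) : ℤ) = ((j - k : ℕ) : ℤ) - 1 := by
            omega
          rw [this]
          push_cast at h6 ⊢
          linarith
        have h8 : T (j - k) r * (m + n) = (j - k - 1) * n := by exact_mod_cast h7
        have h9 := coprime_sum_dvd hcop h8
        have h10 : j - k - 1 = 0 := Nat.eq_zero_of_dvd_of_lt h9 (by omega)
        have hjk2 : j - k = 1 := by omega
        have hT0 : T (j - k) r = 0 := by
          rw [h10] at h8
          simp only [Nat.zero_mul] at h8
          rcases Nat.mul_eq_zero.1 h8 with h | h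
          · exact h
          · omega
        have hT1 : T (j - k) r = 1 := by
          rw [hjk2, hT]
          simp [List.range_succ, hA]
        omega
  exact ⟨P, hDyck, hRS, hSW⟩

lemma dyck_compatible (m n : ℕ) (hm : 0 < m) (hn : 0 < n) (hcop : Nat.Coprime m n)
    (P : List Bool) (hD : IsDyckWord m n P) :
    Compatible m n (swSeq m (rankSet m n P)) (rankSet m n P) := by
  obtain ⟨⟨hPlen, hPcount⟩, hDpos⟩ := hD
  set W := rankWalk (m : ℤ) (n : ℤ) P 0 with hW
  set R := rankSet m n P with hR
  have hmemR : ∀ x : ℤ, x ∈ R ↔ x ∈ W := by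
    intro x; rw [hR, rankSet, List.mem_toFinset]
  have hnodup := rankWalk_nodup m n hcop P hPlen 0
  have hcard : R.card = m + n := by
    rw [hR, rankSet, List.toFinset_card_of_nodup hnodup, rankWalk_length, hPlen]
  have hPne : P ≠ [] := by
    intro h; rw [h] at hPlen; simp at hPlen; omega
  have h0W : (0 : ℤ) ∈ W := by
    cases P with
    | nil => exact absurd rfl hPne
    | cons b bs => rw [hW, rankWalk]; exact List.mem_cons_self
  have h0 : (0 : ℤ) ∈ R := (hmemR 0).2 h0W
  have hpos : ∀ r ∈ R, 0 ≤ r := fun r hr => hDpos r ((hmemR r).1 hr)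
  have hcfalse : P.count false = m := by
    have := count_true_add_count_false P; omega
  have hEnd : rankEnd (m : ℤ) (n : ℤ) P 0 = 0 := by
    rw [rankEnd_eq, hPcount, hcfalse]; ring
  have hstep : ∀ x ∈ R, x + (m : ℤ) ∈ R ∨ x - (n : ℤ) ∈ R := by
    intro x hx
    rcases rankWalk_succ (m : ℤ) (n : ℤ) P 0 x ((hmemR x).1 hx) with (h | h) | (h | h)
    · exact Or.inl ((hmemR _).2 h)
    · rw [hEnd] at h; exact Or.inl (h ▸ h0)
    · exact Or.inr ((hmemR _).2 h)
    · rw [hEnd] at h; exact Or.inr (h ▸ h0)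
  refine ⟨hcard, h0, hpos, ?_⟩
  intro p hp
  have hp1 : p.1 = decide (p.2 + (m : ℤ) ∈ R) := by
    rw [swSeq] at hp
    exact mem_zip_map _ _ p hp
  have hp2R : p.2 ∈ R := by
    have h2 := List.of_mem_zip hp
    exact (Finset.mem_sort (α := ℤ) (· ≤ ·)).1 h2.2
  constructor
  · intro ht
    rw [ht] at hp1
    exact of_decide_eq_true hp1.symm
  · intro hf2
    rw [hf2] at hp1
    have h3 : p.2 + (m : ℤ) ∉ R := of_decide_eq_false hp1.symm
    exact (hstep _ hp2R).resolve_left h3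

/-- A word `σ` of `n` `S`'s and `m` `W`'s is the SW-sequence of some
`(m,n)`-Dyck path if and only if there exists a set `R` of `m+n` nonnegative integers
with `0 ∈ R` compatible with `σ`.  Moreover, any `R` compatible with `σ` is the rank
set of an `(m,n)`-Dyck path whose SW-sequence is `σ`. -/
theorem swSeq_iff_exists_compatible (m n : ℕ) (hm : 0 < m) (hn : 0 < n)
    (hcop : Nat.Coprime m n) (σ : List Bool) (hlen : σ.length = m + n)
    (hcount : σ.count true = n) :
    ((∃ P : List Bool, IsDyckWord m n P ∧ swSeq m (rankSet m n P) = σ) ↔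
      ∃ R : Finset ℤ, Compatible m n σ R) ∧
    (∀ R : Finset ℤ, Compatible m n σ R →
      ∃ P : List Bool, IsDyckWord m n P ∧ rankSet m n P = R ∧ swSeq m R = σ) := by
  have hmain := compatible_main m n hm hn hcop σ hlen
  constructor
  · constructor
    · rintro ⟨P, hD, hsw⟩
      exact ⟨rankSet m n P, by rw [← hsw]; exact dyck_compatible m n hm hn hcop P hD⟩
    · rintro ⟨R, hR⟩
      obtain ⟨P, hD, hrs, hsw⟩ := hmain R hR
      exact ⟨P, hD, by rw [hrs, hsw]⟩
  · intro R hR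
    exact hmain R hR
end

section
/- Let (m,n) be a coprime pair of positive integers and let R ≠ R_0 = {0,1,…,m+n−1} be the rank set of an (m,n)-Dyck path. Then both ℒ(R) = ((R∖{0}) ∪ {m+n}) − min(R∖{0}) and ℛ(R) = (R∖{max R}) ∪ {max R − m − n} are rank sets of (m,n)-Dyck paths. -/
/-- The rank set `R₀ = {0, 1, …, m+n-1}` of the unique Dyck path of area `0`. -/
def baseRankSet (m n : ℕ) : Finset ℤ :=
  (Finset.range (m + n)).image (fun i : ℕ => (i : ℤ))

/-- The left operation `ℒ(R) = ((R \ {0}) ∪ {m+n}) - min (R \ {0})`. -/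
def leftOp (m n : ℕ) (R : Finset ℤ) : Finset ℤ :=
  ((R.erase 0) ∪ {((m : ℤ) + n)}).image
    (fun r => r - WithTop.untopD 0 (R.erase 0).min)

/-- The right operation `ℛ(R) = (R \ {max R}) ∪ {max R - m - n}`. -/
def rightOp (m n : ℕ) (R : Finset ℤ) : Finset ℤ :=
  (R.erase (WithBot.unbotD 0 R.max)) ∪ {WithBot.unbotD 0 R.max - m - n}

namespace RankAux

def stp (m n : ℤ) (b : Bool) : ℤ := if b then m else -n

def wsum (m n : ℤ) (P : List Bool) : ℤ := (P.map (stp m n)).sum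

@[simp] lemma wsum_nil (m n : ℤ) : wsum m n [] = 0 := rfl

@[simp] lemma wsum_cons (m n : ℤ) (b : Bool) (P : List Bool) :
    wsum m n (b :: P) = stp m n b + wsum m n P := by simp [wsum]

@[simp] lemma wsum_append (m n : ℤ) (A B : List Bool) :
    wsum m n (A ++ B) = wsum m n A + wsum m n B := by simp [wsum]

@[simp] lemma rankWalk_nil (m n : ℤ) (r : ℤ) : rankWalk m n [] r = [] := rfl

@[simp] lemma rankWalk_cons (m n : ℤ) (b : Bool) (P : List Bool) (r : ℤ) :
    rankWalk m n (b :: P) r = r :: rankWalk m n P (r + stp m n b) := rfl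

lemma rankWalk_append (m n : ℤ) (A B : List Bool) (r : ℤ) :
    rankWalk m n (A ++ B) r = rankWalk m n A r ++ rankWalk m n B (r + wsum m n A) := by
  induction A generalizing r with
  | nil => simp
  | cons a A ih => simp [ih, add_assoc]

@[simp] lemma rankWalk_length (m n : ℤ) (P : List Bool) (r : ℤ) :
    (rankWalk m n P r).length = P.length := by
  induction P generalizing r with
  | nil => rfl
  | cons b P ih => simp [ih]

lemma rankWalk_shift (m n : ℤ) (P : List Bool) (r t : ℤ) :
    rankWalk m n P (r + t) = (rankWalk m n P r).map (· + t) := by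
  induction P generalizing r with
  | nil => rfl
  | cons b P ih =>
    simp only [rankWalk_cons, List.map_cons]
    rw [show r + t + stp m n b = (r + stp m n b) + t by ring, ih]

lemma rankWalk_eq_map (m n : ℤ) (P : List Bool) (r : ℤ) :
    rankWalk m n P r = (List.range P.length).map (fun k => r + wsum m n (P.take k)) := by
  induction P generalizing r with
  | nil => rfl
  | cons b P ih =>
    rw [List.length_cons, List.range_succ_eq_map]
    simp only [rankWalk_cons, List.map_cons, List.map_map, ih]
    congr 1
    · simp
    · apply List.map_congr_left
      intro k _
      simp [Function.comp, add_assoc]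

lemma mem_split (m n : ℤ) {P : List Bool} {r x : ℤ} (h : x ∈ rankWalk m n P r) :
    ∃ A B, P = A ++ B ∧ B ≠ [] ∧ x = r + wsum m n A := by
  induction P generalizing r with
  | nil => simp at h
  | cons b P ih =>
    rcases List.mem_cons.1 h with h | h
    · exact ⟨[], b :: P, rfl, by simp, by simp [h]⟩
    · obtain ⟨A, B, hP, hB, hx⟩ := ih h
      exact ⟨b :: A, B, by simp [hP], hB, by simp [hx, stp, add_assoc]⟩

lemma wsum_count (m n : ℤ) (P : List Bool) :
    wsum m n P = P.count true * m - P.count false * n := by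
  induction P with
  | nil => simp
  | cons b P ih =>
    cases b <;> simp [ih, stp, List.count_cons] <;> ring

lemma cast_wsum (m n : ℕ) (A : List Bool) :
    ((wsum m n A : ℤ) : ZMod (m + n)) = A.length * (m : ZMod (m + n)) := by
  induction A with
  | nil => simp
  | cons b A ih =>
    have hmn : ((m : ZMod (m+n)) + (n : ZMod (m+n))) = 0 := by
      rw [← Nat.cast_add, ZMod.natCast_self]
    have hn' : ((-(n : ℤ) : ℤ) : ZMod (m + n)) = (m : ZMod (m + n)) := by
      push_cast
      linear_combination -hmn
    cases b <;> simp [stp, ih, hn'] <;> push_cast <;> ring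

lemma walk_nodup (m n : ℕ) (hcop : Nat.Coprime m n) (P : List Bool)
    (hlen : P.length = m + n) (r : ℤ) : (rankWalk m n P r).Nodup := by
  rw [rankWalk_eq_map]
  refine List.Nodup.map_on ?_ List.nodup_range
  intro k1 h1 k2 h2 heq
  rw [List.mem_range, hlen] at h1 h2
  have hts : wsum m n (P.take k1) = wsum m n (P.take k2) := by linarith [heq]
  have hc : ((k1 : ZMod (m+n)) * m = (k2 : ZMod (m+n)) * m) := by
    have c1 := cast_wsum m n (P.take k1)
    have c2 := cast_wsum m n (P.take k2)
    rw [List.length_take] at c1 c2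
    rw [hts, c2] at c1
    simpa [Nat.min_eq_left (by omega : k1 ≤ P.length), Nat.min_eq_left (by omega : k2 ≤ P.length)] using c1.symm
  have hu : IsUnit ((m : ZMod (m+n))) := by
    rw [ZMod.isUnit_iff_coprime]
    simpa using (Nat.coprime_add_self_right).2 hcop
  have hk : (k1 : ZMod (m+n)) = k2 := hu.mul_right_cancel hc
  haveI : NeZero (m + n) := ⟨by omega⟩
  calc k1 = ((k1 : ZMod (m+n))).val := (ZMod.val_cast_of_lt h1).symm
    _ = ((k2 : ZMod (m+n))).val := by rw [hk]
    _ = k2 := ZMod.val_cast_of_lt h2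

lemma toFinset_map' (l : List ℤ) (f : ℤ → ℤ) :
    (l.map f).toFinset = l.toFinset.image f := by
  ext x; simp

lemma count_tf (l : List Bool) : l.count true + l.count false = l.length := by
  induction l with
  | nil => simp
  | cons b t ih => cases b <;> simp [List.count_cons] <;> omega

end RankAux

open RankAux

lemma leftOp_dyck (m n : ℕ) (hm : 0 < m) (hn : 0 < n)
    (hcop : Nat.Coprime m n) (R : Finset ℤ) (hR : IsDyckRankSet m n R) :
    IsDyckRankSet m n (leftOp m n R) := by
  obtain ⟨P, ⟨⟨hlen, hcnt⟩, hpos⟩, hset⟩ := hR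
  have hcf : P.count false = m := by have := count_tf P; omega
  have hw0 : wsum (m : ℤ) n P = 0 := by
    rw [wsum_count, hcnt, hcf]; ring
  have hnd : (rankWalk (m : ℤ) n P 0).Nodup := walk_nodup m n hcop P hlen 0
  -- first letter is true
  obtain ⟨P₁, hP1⟩ : ∃ P₁, P = true :: P₁ := by
    match hPm : P, hlen with
    | [], hlen => simp at hlen; omega
    | false :: [], hlen => simp at hlen; omega
    | false :: b :: P₂, hlen =>
      exfalso
      have : (0 : ℤ) ≤ 0 + stp m n false := hpos _ (by simp)
      simp [stp] at this
      omega
    | true :: P₁, hlen => exact ⟨P₁, rfl⟩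
  -- last letter is false
  obtain ⟨P₂, hP2⟩ : ∃ P₂, P = P₂ ++ [false] ∧ wsum (m:ℤ) n P₂ = n := by
    rcases List.eq_nil_or_concat P with h | ⟨P₂, bl, h⟩
    · rw [h] at hlen; simp at hlen; omega
    · rw [List.concat_eq_append] at h
      have hw2 : wsum (m:ℤ) n P₂ + stp m n bl = 0 := by
        rw [h] at hw0; simpa using hw0
      have hmem : wsum (m:ℤ) n P₂ ∈ rankWalk (m:ℤ) n P 0 := by
        rw [h, rankWalk_append]
        simp
      have := hpos _ hmem
      cases bl
      · exact ⟨P₂, h, by simp [stp] at hw2; linarith⟩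
      · exfalso; simp [stp] at hw2; omega
  obtain ⟨hP2, hwP2⟩ := hP2
  -- the minimum of R.erase 0
  have hnR : (n : ℤ) ∈ R.erase 0 := by
    refine Finset.mem_erase.2 ⟨by exact_mod_cast hn.ne', ?_⟩
    rw [← hset]
    simp only [rankSet, List.mem_toFinset]
    rw [hP2, rankWalk_append]
    simp [hwP2]
  have hne' : (R.erase 0).Nonempty := ⟨_, hnR⟩
  set c : ℤ := (R.erase 0).min' hne' with hcdef
  have huntop : WithTop.untopD 0 (R.erase 0).min = c := by
    rw [← Finset.coe_min' hne']; rfl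
  have hcmem : c ∈ R.erase 0 := Finset.min'_mem _ _
  have hcmin : ∀ x ∈ R.erase 0, c ≤ x := fun x hx => Finset.min'_le _ x hx
  have hc0 : c ≠ 0 := Finset.ne_of_mem_erase hcmem
  have hcn : c ≤ n := hcmin _ hnR
  have hcL : c ∈ rankWalk (m:ℤ) n P 0 := by
    have hcR : c ∈ rankSet m n P := hset ▸ (Finset.mem_of_mem_erase hcmem)
    simpa [rankSet] using hcR
  obtain ⟨C, D, hPCD, hD, hcw⟩ := mem_split (m:ℤ) n hcL
  rw [zero_add] at hcw
  -- C is nonempty, starts with true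
  obtain ⟨C₁, hC1⟩ : ∃ C₁, C = true :: C₁ := by
    match hCm : C, hcw with
    | [], hcw => exact absurd (by simpa using hcw) hc0
    | b :: C₁, hcw =>
      refine ⟨C₁, ?_⟩
      rw [hP1] at hPCD
      simp only [List.cons_append] at hPCD
      injection hPCD with hb _
      rw [← hb]
  -- D ends with false
  obtain ⟨D₁, hD1⟩ : ∃ D₁, D = D₁ ++ [false] := by
    rcases List.eq_nil_or_concat D with h | ⟨D₁, dl, h⟩
    · exact absurd h hD
    · rw [List.concat_eq_append] at h
      refine ⟨D₁, ?_⟩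
      rw [h]
      have : (C ++ D₁) ++ [dl] = P₂ ++ [false] := by
        rw [← hP2, hPCD, h]; simp
      have := (List.append_inj' this rfl).2
      simp at this
      rw [this]
  have hP : P = true :: (C₁ ++ (D₁ ++ [false])) := by
    rw [hPCD, hC1, hD1]; simp
  have hwC1 : wsum (m:ℤ) n C₁ = c - m := by
    rw [hC1] at hcw; simp [stp] at hcw; linarith
  have hwD1 : wsum (m:ℤ) n D₁ = n - c := by
    rw [hP] at hw0
    simp [stp, hwC1] at hw0
    linarith
  set X := rankWalk (m:ℤ) n C₁ m with hX
  set Y := rankWalk (m:ℤ) n D₁ c with hY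
  have hL : rankWalk (m:ℤ) n P 0 = 0 :: (X ++ (Y ++ [(n:ℤ)])) := by
    rw [hP, rankWalk_cons, rankWalk_append, rankWalk_append]
    rw [show (0:ℤ) + stp (m:ℤ) n true = (m:ℤ) by simp [stp]]
    rw [show (m:ℤ) + wsum (m:ℤ) n C₁ = c by rw [hwC1]; ring]
    rw [show c + wsum (m:ℤ) n D₁ = (n:ℤ) by rw [hwD1]; ring]
    simp [hX, hY, stp]
  -- the new path
  set Q : List Bool := D₁ ++ (true :: false :: C₁) with hQdef
  have hQ : rankWalk (m:ℤ) n Q 0 =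
      (Y ++ ((n:ℤ) :: ((m:ℤ)+n) :: X)).map (fun r => r + (-c)) := by
    have e1 : rankWalk (m:ℤ) n D₁ 0 = Y.map (fun r => r + (-c)) := by
      have := rankWalk_shift (m:ℤ) n D₁ c (-c)
      simpa using this
    have e2 : rankWalk (m:ℤ) n C₁ ((m:ℤ) + -c) = X.map (fun r => r + (-c)) :=
      rankWalk_shift (m:ℤ) n C₁ m (-c)
    rw [hQdef, rankWalk_append, rankWalk_cons, rankWalk_cons, e1]
    rw [show (0:ℤ) + wsum (m:ℤ) n D₁ = (n:ℤ) + -c by rw [hwD1]; ring]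
    rw [show ((n:ℤ) + -c) + stp (m:ℤ) n true = ((m:ℤ) + n) + -c by simp [stp]; ring]
    rw [show (((m:ℤ) + n) + -c) + stp (m:ℤ) n false = (m:ℤ) + -c by simp [stp]; ring]
    rw [e2, List.map_append, List.map_cons, List.map_cons]
  refine ⟨Q, ⟨⟨?_, ?_⟩, ?_⟩, ?_⟩
  · -- length
    rw [hP] at hlen
    simp [hQdef] at *
    omega
  · -- count
    rw [hP] at hcnt
    simp [hQdef, List.count_append, List.count_cons] at *
    omega
  · -- nonneg
    intro r hr
    rw [hQ] at hr
    simp only [List.mem_map, List.mem_append, List.mem_cons] at hr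
    obtain ⟨y, hy, rfl⟩ := hr
    have key : ∀ z : ℤ, z ∈ Y ∨ z = (n:ℤ) ∨ z ∈ X → c ≤ z := by
      intro z hz
      have hzL : z ∈ rankWalk (m:ℤ) n P 0 := by
        rw [hL]; rcases hz with h|h|h <;> simp [h]
      have hz0 : z ≠ 0 := by
        rw [hL] at hnd
        have h0 := (List.nodup_cons.1 hnd).1
        rintro rfl
        rcases hz with h|h|h
        · exact h0 (by simp [h])
        · exact absurd h.symm (Int.natCast_ne_zero.2 hn.ne')
        · exact h0 (by simp [h])
      refine hcmin z (Finset.mem_erase.2 ⟨hz0, ?_⟩)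
      rw [← hset]
      simpa [rankSet] using hzL
    rcases hy with h | h | h | h
    · linarith [key y (Or.inl h)]
    · rw [h]; linarith
    · rw [h]
      have : (0:ℤ) ≤ m := by exact_mod_cast hm.le
      linarith
    · linarith [key y (Or.inr (Or.inr h))]
  · -- rank set equality
    simp only [rankSet]
    rw [hQ, toFinset_map', leftOp, huntop]
    simp only [sub_eq_add_neg]
    congr 1
    have h0notin : (0:ℤ) ∉ X ++ (Y ++ [(n:ℤ)]) := by
      rw [hL] at hnd
      exact (List.nodup_cons.1 hnd).1
    have hR0 : R.erase 0 = (X ++ (Y ++ [(n:ℤ)])).toFinset := by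
      rw [← hset]
      simp only [rankSet]
      rw [hL, List.toFinset_cons]
      rw [Finset.erase_insert (by simp at h0notin ⊢; tauto)]
    rw [hR0]
    ext x
    simp
    tauto

lemma rightOp_dyck (m n : ℕ) (hm : 0 < m) (hn : 0 < n)
    (hcop : Nat.Coprime m n) (R : Finset ℤ) (hR : IsDyckRankSet m n R)
    (hne : R ≠ baseRankSet m n) :
    IsDyckRankSet m n (rightOp m n R) := by
  obtain ⟨P, ⟨⟨hlen, hcnt⟩, hpos⟩, hset⟩ := hR
  have hcf : P.count false = m := by have := count_tf P; omega
  have hw0 : wsum (m : ℤ) n P = 0 := by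
    rw [wsum_count, hcnt, hcf]; ring
  have hnd : (rankWalk (m : ℤ) n P 0).Nodup := walk_nodup m n hcop P hlen 0
  have hmemR : ∀ z ∈ rankWalk (m:ℤ) n P 0, z ∈ R := by
    intro z hz
    rw [← hset]
    simpa [rankSet] using hz
  have hRne : R.Nonempty := by
    have : P ≠ [] := by intro h; rw [h] at hlen; simp at hlen; omega
    obtain ⟨b, P₁, rfl⟩ := List.exists_cons_of_ne_nil this
    exact ⟨0, hmemR 0 (by simp)⟩
  set Mx : ℤ := R.max' hRne with hMdef
  have hunb : WithBot.unbotD 0 R.max = Mx := by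
    rw [← Finset.coe_max' hRne]; rfl
  have hMmem : Mx ∈ R := Finset.max'_mem _ _
  have hMmax : ∀ x ∈ R, x ≤ Mx := fun x hx => Finset.le_max' _ x hx
  -- Mx ≥ m + n since R ≠ baseRankSet
  have hcardR : R.card = m + n := by
    rw [← hset]
    simp only [rankSet]
    rw [List.toFinset_card_of_nodup hnd]
    simp [hlen]
  have hMge : (m : ℤ) + n ≤ Mx := by
    by_contra hlt
    push_neg at hlt
    apply hne
    have hsub : R ⊆ baseRankSet m n := by
      intro x hx
      have hx0 : (0:ℤ) ≤ x := by
        have : x ∈ rankWalk (m:ℤ) n P 0 := by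
          have := hset ▸ hx
          simpa [rankSet] using this
        exact hpos x this
      have hxM : x ≤ Mx := hMmax x hx
      simp only [baseRankSet, Finset.mem_image, Finset.mem_range]
      refine ⟨x.toNat, ?_, by omega⟩
      omega
    have hcard2 : (baseRankSet m n).card ≤ R.card := by
      rw [hcardR]
      apply le_trans (Finset.card_image_le)
      simp
    exact Finset.eq_of_subset_of_card_le hsub hcard2
  have hM0 : (0:ℤ) < Mx := by
    have : (0:ℤ) < (m:ℤ) + n := by positivity
    linarith
  have hML : Mx ∈ rankWalk (m:ℤ) n P 0 := by
    have := hset ▸ hMmem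
    simpa [rankSet] using this
  obtain ⟨A, B, hPAB, hB, hMw⟩ := mem_split (m:ℤ) n hML
  rw [zero_add] at hMw
  -- A nonempty and ends with true
  have hAne : A ≠ [] := by
    intro h
    rw [h] at hMw
    simp at hMw
    omega
  obtain ⟨A₁, a, hA⟩ : ∃ A₁ a, A = A₁ ++ [a] := by
    rcases List.eq_nil_or_concat A with h | ⟨A₁, a, h⟩
    · exact absurd h hAne
    · exact ⟨A₁, a, by rw [h]; simp⟩
  have hP'' : P = A₁ ++ (a :: B) := by rw [hPAB, hA]; simp
  have hwA1L : wsum (m:ℤ) n A₁ ∈ rankWalk (m:ℤ) n P 0 := by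
    rw [hP'', rankWalk_append]
    simp
  have hwA1le : wsum (m:ℤ) n A₁ ≤ Mx := hMmax _ (hmemR _ hwA1L)
  have ha : a = true := by
    cases a
    · exfalso
      rw [hA] at hMw
      simp [stp] at hMw
      omega
    · rfl
  rw [ha] at hA
  have hwA1 : wsum (m:ℤ) n A₁ = Mx - m := by
    rw [hA] at hMw
    simp [stp] at hMw
    linarith
  -- B starts with false
  obtain ⟨b, B₁, hBc⟩ := List.exists_cons_of_ne_nil hB
  have hb : b = false := by
    cases b
    · rfl
    · exfalso
      cases B₁ with
      | nil =>
        rw [hPAB, hBc, hA] at hw0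
        simp [stp] at hw0
        omega
      | cons e B₂ =>
        have : Mx + m ∈ rankWalk (m:ℤ) n P 0 := by
          rw [hPAB, hBc, rankWalk_append, hMw]
          simp [stp]
        have := hMmax _ (hmemR _ this)
        omega
  rw [hb] at hBc
  have hP : P = A₁ ++ (true :: false :: B₁) := by
    rw [hPAB, hA, hBc]; simp
  set X := rankWalk (m:ℤ) n A₁ 0 with hX
  set Y := rankWalk (m:ℤ) n B₁ (Mx - n) with hY
  have hL : rankWalk (m:ℤ) n P 0 = X ++ ((Mx - m) :: Mx :: Y) := by
    rw [hP, rankWalk_append, rankWalk_cons, rankWalk_cons]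
    rw [show (0:ℤ) + wsum (m:ℤ) n A₁ = Mx - m by rw [hwA1]; ring]
    rw [show (Mx - (m:ℤ)) + stp (m:ℤ) n true = Mx by simp [stp]]
    rw [show Mx + stp (m:ℤ) n false = Mx - n by simp [stp]; ring]
  set Q : List Bool := A₁ ++ (false :: true :: B₁) with hQdef
  have hQ : rankWalk (m:ℤ) n Q 0 = X ++ ((Mx - m) :: (Mx - m - n) :: Y) := by
    rw [hQdef, rankWalk_append, rankWalk_cons, rankWalk_cons]
    rw [show (0:ℤ) + wsum (m:ℤ) n A₁ = Mx - m by rw [hwA1]; ring]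
    rw [show (Mx - (m:ℤ)) + stp (m:ℤ) n false = Mx - m - n by simp [stp]; ring]
    rw [show (Mx - (m:ℤ) - n) + stp (m:ℤ) n true = Mx - n by simp [stp]; ring]
  refine ⟨Q, ⟨⟨?_, ?_⟩, ?_⟩, ?_⟩
  · rw [hP] at hlen
    simp [hQdef] at *
    omega
  · rw [hP] at hcnt
    simp [hQdef, List.count_append, List.count_cons] at *
    omega
  · intro r hr
    rw [hQ] at hr
    simp only [List.mem_append, List.mem_cons] at hr
    rcases hr with h | h | h | h
    · exact hpos r (by rw [hL]; simp [h])
    · rw [h]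
      have := hpos (Mx - m) (by rw [hL]; simp)
      linarith
    · rw [h]; linarith
    · exact hpos r (by rw [hL]; simp [h])
  · simp only [rankSet]
    rw [hQ, rightOp, hunb]
    have hMnotin : Mx ∉ (X ++ [Mx - m]) ++ Y := by
      rw [hL] at hnd
      have : ((X ++ [Mx - m]) ++ Mx :: Y).Nodup := by
        rw [show (X ++ [Mx - m]) ++ Mx :: Y = X ++ ((Mx - m) :: Mx :: Y) by simp]
        exact hnd
      have h2 := List.nodup_middle.1 this
      simpa using (List.nodup_cons.1 h2).1
    have hRins : R = insert Mx ((X ++ ((Mx - m) :: Y)).toFinset) := by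
      rw [← hset]
      simp only [rankSet]
      rw [hL]
      ext x
      simp
      tauto
    have hER : R.erase Mx = (X ++ ((Mx - m) :: Y)).toFinset := by
      rw [hRins]
      apply Finset.erase_insert
      simp only [List.mem_toFinset] at hMnotin ⊢
      intro hx
      apply hMnotin
      simp at hx ⊢
      tauto
    rw [hER]
    ext x
    simp


/-- For the rank set `R ≠ R₀ = {0, 1, …, m+n-1}` of an `(m,n)`-Dyck
path, both `ℒ(R)` and `ℛ(R)` are rank sets of `(m,n)`-Dyck paths. -/
theorem leftOp_rightOp_dyck (m n : ℕ) (hm : 0 < m) (hn : 0 < n)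
    (hcop : Nat.Coprime m n) (R : Finset ℤ) (hR : IsDyckRankSet m n R)
    (hne : R ≠ baseRankSet m n) :
    IsDyckRankSet m n (leftOp m n R) ∧ IsDyckRankSet m n (rightOp m n R) := by
  exact ⟨leftOp_dyck m n hm hn hcop R hR, rightOp_dyck m n hm hn hcop R hR hne⟩
end
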